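/- Let $X \leq W_n$, $\alpha \in W_n \setminus X$, and $Y = \langle X, \alpha \rangle$. If $v \in \mathbb{F}_2^{2^n}$ satisfies $v \in \mathrm{Fix}(\Phi(Y))$ and, for every $\beta \in X$, there exists $u^{(\beta)} \in \mathrm{Fix}(\Phi(Y))$ with $\alpha(v) + \alpha\beta(v) = u^{(\beta)} + \alpha\beta(u^{(\beta)})$, then $v + \beta(v) = \alpha(v) + \alpha\beta(v)$ for every $\beta \in X$. -/

import Mathlib

/-- Leaves of the complete rooted binary tree of depth `n`. -/
abbrev Leaf (n : ℕ) := Fin n → Bool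

/-- Two leaves agree on the first `k` levels. -/
def agree (n k : ℕ) (x y : Leaf n) : Prop := ∀ i : Fin n, (i : ℕ) < k → x i = y i

/-- The automorphism group of the depth-`n` complete rooted binary tree, realized as the
subgroup of permutations of the leaves preserving, for each `k`, agreement on the first
`k` levels. -/
def W (n : ℕ) : Subgroup (Equiv.Perm (Leaf n)) where
  carrier := {σ | ∀ (k : ℕ) (x y : Leaf n), agree n k x y ↔ agree n k (σ x) (σ y)}
  one_mem' := by intro k x y; rfl
  mul_mem' := by
    intro a b ha hb k x y
    simpa [Equiv.Perm.mul_apply] using (hb k x y).trans (ha k (b x) (b y))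
  inv_mem' := by
    intro a ha k x y
    simpa using (ha k (a⁻¹ x) (a⁻¹ y)).symm

/-- Restriction of a leaf to the first `n-1` levels. -/
def res {n : ℕ} (x : Leaf n) : Leaf (n - 1) := fun i => x (Fin.castLE (Nat.sub_le n 1) i)

/-- Extension of a depth-`n-1` vertex to a leaf. -/
def ext {n : ℕ} (p : Leaf (n - 1)) : Leaf n :=
  fun i => if h : (i : ℕ) < n - 1 then p ⟨i, h⟩ else false

lemma res_ext {n : ℕ} (p : Leaf (n - 1)) : res (ext p) = p := by
  funext i
  simp [res, ext, i.isLt]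

lemma agree_iff_res {n : ℕ} (x y : Leaf n) : agree n (n - 1) x y ↔ res x = res y := by
  constructor
  · intro h; funext i; exact h _ i.isLt
  · intro h i hi
    have h2 : Fin.castLE (Nat.sub_le n 1) (⟨(i : ℕ), hi⟩ : Fin (n - 1)) = i := by
      ext; rfl
    have := congrFun h (⟨(i : ℕ), hi⟩ : Fin (n - 1))
    simpa [res, h2] using this

/-- The natural restriction homomorphism `π_n : W_n → Aut(T_{n-1})`. -/
def treePi (n : ℕ) : (W n) →* Equiv.Perm (Leaf (n - 1)) where
  toFun σ :=
    { toFun := fun p => res ((σ : Equiv.Perm (Leaf n)) (ext p))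
      invFun := fun p => res ((σ : Equiv.Perm (Leaf n))⁻¹ (ext p))
      left_inv := by
        intro p
        have h1 : agree n (n - 1) (ext (res ((σ : Equiv.Perm (Leaf n)) (ext p))))
            ((σ : Equiv.Perm (Leaf n)) (ext p)) :=
          (agree_iff_res _ _).2 (res_ext _)
        have hinv := (W n).inv_mem σ.2
        have h2 := (hinv (n - 1) _ _).1 h1
        have h3 := (agree_iff_res _ _).1 h2
        simpa [res_ext] using h3
      right_inv := by
        intro p
        have h1 : agree n (n - 1) (ext (res ((σ : Equiv.Perm (Leaf n))⁻¹ (ext p))))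
            ((σ : Equiv.Perm (Leaf n))⁻¹ (ext p)) :=
          (agree_iff_res _ _).2 (res_ext _)
        have h2 := (σ.2 (n - 1) _ _).1 h1
        have h3 := (agree_iff_res _ _).1 h2
        simpa [res_ext] using h3 }
  map_one' := by
    refine Equiv.ext fun p => ?_
    simp [res_ext]
  map_mul' := by
    intro σ τ
    refine Equiv.ext fun p => ?_
    have h1 : agree n (n - 1) (ext (res ((τ : Equiv.Perm (Leaf n)) (ext p))))
        ((τ : Equiv.Perm (Leaf n)) (ext p)) := (agree_iff_res _ _).2 (res_ext _)
    have h2 := (σ.2 (n - 1) _ _).1 h1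
    have h3 := (agree_iff_res _ _).1 h2
    simpa using h3.symm

/-- `K_n`, the kernel of `π_n`, viewed as a subgroup of the permutations of the leaves. -/
def K (n : ℕ) : Subgroup (Equiv.Perm (Leaf n)) :=
  Subgroup.map (W n).subtype (treePi n).ker

/-- The conjugate `X^a = a⁻¹ X a` of a subgroup `X` by an element `a`. -/
def conjBy {G : Type*} [Group G] (a : G) (X : Subgroup G) : Subgroup G :=
  X.map (MulAut.conj a⁻¹).toMonoidHom

/-- `M` is a maximal subgroup of `H` (inside a common ambient group). -/
def IsMaximalIn {G : Type*} [Group G] (M H : Subgroup G) : Prop :=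
  M < H ∧ ∀ X : Subgroup G, M < X → X ≤ H → X = H

/-- The Frattini subgroup of `H`: the intersection of all maximal subgroups of `H`. -/
def frattiniIn {G : Type*} [Group G] (H : Subgroup G) : Subgroup G :=
  H ⊓ sInf {M | IsMaximalIn M H}

section Aux

lemma agree_ext' {n k : ℕ} (p q : Leaf (n - 1)) :
    agree n k (ext p) (ext q) ↔ agree (n - 1) k p q := by
  constructor
  · intro h i hi
    have := h (Fin.castLE (Nat.sub_le n 1) i) hi
    simpa [ext, i.isLt] using this
  · intro h i hi
    by_cases hii : (i : ℕ) < n - 1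
    · have := h ⟨i, hii⟩ hi
      simpa [ext, hii] using this
    · simp [ext, hii]

lemma agree_res' {n k : ℕ} (hk : k ≤ n - 1) (a b : Leaf n) :
    agree (n - 1) k (res a) (res b) ↔ agree n k a b := by
  constructor
  · intro h i hi
    have hii : (i : ℕ) < n - 1 := lt_of_lt_of_le hi hk
    have := h ⟨i, hii⟩ hi
    simpa [res] using this
  · intro h i hi
    exact h _ hi

lemma agree_all {m k : ℕ} (hk : m ≤ k) (a b : Leaf m) : agree m k a b ↔ a = b := by
  constructor
  · intro h; funext i; exact h i (lt_of_lt_of_le i.isLt hk)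
  · rintro rfl i _; rfl

lemma treePi_mem (n : ℕ) (σ : W n) :
    (treePi n σ : Equiv.Perm (Leaf (n - 1))) ∈ W (n - 1) := by
  intro k p q
  rcases le_or_gt k (n - 1) with hk | hk
  · have e1 := agree_ext' (n := n) (k := k) p q
    have e2 := σ.2 k (ext p) (ext q)
    have e3 := agree_res' hk ((σ : Equiv.Perm (Leaf n)) (ext p))
      ((σ : Equiv.Perm (Leaf n)) (ext q))
    exact (e1.symm.trans e2).trans e3.symm
  · rw [agree_all hk.le, agree_all hk.le]
    exact ⟨fun h => by rw [h], fun h => (treePi n σ).injective h⟩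

/-- Flip the last coordinate. -/
def flipLast {n : ℕ} (x : Leaf (n + 1)) : Leaf (n + 1) :=
  fun i => if i = Fin.last n then !(x i) else x i

lemma res_flipLast {n : ℕ} (x : Leaf (n + 1)) : res (flipLast x) = res x := by
  funext i
  have : Fin.castLE (Nat.sub_le (n + 1) 1) i ≠ Fin.last n := by
    intro h
    have hv : (i : ℕ) = n := congrArg Fin.val h
    have := i.isLt
    omega
  simp [res, flipLast, this]

lemma flipLast_ne {n : ℕ} (x : Leaf (n + 1)) : flipLast x ≠ x := by
  intro h
  have := congrFun h (Fin.last n)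
  simp [flipLast] at this

lemma eq_or_flipLast {n : ℕ} {a b : Leaf (n + 1)} (h : res a = res b) :
    b = a ∨ b = flipLast a := by
  have hco : ∀ i : Fin (n + 1), i ≠ Fin.last n → a i = b i := by
    intro i hi
    have hii : (i : ℕ) < n + 1 - 1 := by
      have := i.isLt
      rcases Nat.lt_or_ge (i : ℕ) n with h' | h'
      · simpa using h'
      · exact absurd (Fin.ext (show (i : ℕ) = n by omega)) hi
    have := congrFun h (⟨(i : ℕ), hii⟩ : Fin (n + 1 - 1))
    simpa [res, Fin.ext_iff] using this
  by_cases hl : a (Fin.last n) = b (Fin.last n)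
  · left
    funext i
    by_cases hi : i = Fin.last n
    · rw [hi]; exact hl.symm
    · exact (hco i hi).symm
  · right
    funext i
    by_cases hi : i = Fin.last n
    · subst hi
      simp only [flipLast, if_pos rfl]
      cases ha : a (Fin.last n) <;> cases hb : b (Fin.last n) <;>
        simp_all
    · simp only [flipLast, if_neg hi]
      exact (hco i hi).symm

lemma ker_sq (n : ℕ) (t : W (n + 1)) (ht : treePi (n + 1) t = 1) :
    ((t : Equiv.Perm (Leaf (n + 1))))  ^ 2 = 1 := by
  have hker : ∀ p : Leaf (n + 1 - 1),
      res ((t : Equiv.Perm (Leaf (n + 1))) (ext p)) = p := by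
    intro p
    have := congrFun (congrArg (fun (e : Equiv.Perm (Leaf (n + 1 - 1))) => e.toFun) ht) p
    simpa [treePi] using this
  have hres : ∀ x : Leaf (n + 1), res ((t : Equiv.Perm (Leaf (n + 1))) x) = res x := by
    intro x
    have h1 : agree (n + 1) (n + 1 - 1) (ext (res x)) x :=
      (agree_iff_res _ _).2 (res_ext _)
    have h2 := (t.2 (n + 1 - 1) _ _).1 h1
    have h3 := (agree_iff_res _ _).1 h2
    rw [← h3, hker]
  have key : ∀ x : Leaf (n + 1),
      (t : Equiv.Perm (Leaf (n + 1))) ((t : Equiv.Perm (Leaf (n + 1))) x) = x := by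
    intro x
    rcases eq_or_flipLast (hres x).symm with h | h
    · rw [h, h]
    · have h3 : res ((t : Equiv.Perm (Leaf (n + 1))) (flipLast x)) = res x := by
        rw [hres, res_flipLast]
      rcases eq_or_flipLast h3.symm with h4 | h4
      · rw [h, h4]
      · exfalso
        rw [← h] at h4
        exact flipLast_ne x (h.symm.trans ((t : Equiv.Perm (Leaf (n + 1))).injective h4))
  refine Equiv.ext fun x => ?_
  simpa [pow_succ, Equiv.Perm.mul_apply] using key x

lemma W_pow : ∀ (n : ℕ) (σ : Equiv.Perm (Leaf n)), σ ∈ W n → σ ^ 2 ^ n = 1 := by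
  intro n
  induction n with
  | zero =>
    intro σ hσ
    haveI : Subsingleton (Leaf 0) := ⟨fun a b => funext fun i => i.elim0⟩
    exact Equiv.ext fun x => Subsingleton.elim _ _
  | succ n ih =>
    intro σ hσ
    set s : W (n + 1) := ⟨σ, hσ⟩ with hs
    have hmem : (treePi (n + 1) s : Equiv.Perm (Leaf n)) ∈ W n := treePi_mem (n + 1) s
    have h1 : (treePi (n + 1) s : Equiv.Perm (Leaf n)) ^ 2 ^ n = 1 := ih _ hmem
    have h2 : treePi (n + 1) (s ^ 2 ^ n) = 1 := by
      rw [map_pow]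
      exact h1
    have h3 := ker_sq n _ h2
    have h4 : ((s ^ 2 ^ n : W (n + 1)) : Equiv.Perm (Leaf (n + 1))) = σ ^ 2 ^ n := by
      simp [hs]
    rw [pow_succ, pow_mul, ← h4, h3]

lemma coatom_lemma {P : Type*} [Group P] [Finite P] (hP : IsPGroup 2 P)
    {M : Subgroup P} (hM : IsCoatom M) :
    (∀ g : P, g ^ 2 ∈ M) ∧ (∀ g h : P, g * h * g⁻¹ * h⁻¹ ∈ M) := by
  haveI : Fact (Nat.Prime 2) := ⟨Nat.prime_two⟩
  haveI : Group.IsNilpotent P := hP.isNilpotent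
  haveI hnorm : M.Normal :=
    Subgroup.NormalizerCondition.normal_of_coatom M normalizerCondition_of_isNilpotent hM
  have hQ : IsPGroup 2 (P ⧸ M) := hP.to_quotient M
  have hsub : ∀ H : Subgroup (P ⧸ M), H = ⊥ ∨ H = ⊤ := by
    intro H
    have hle : M ≤ H.comap (QuotientGroup.mk' M) := by
      intro m hm
      have : QuotientGroup.mk' M m = 1 := (QuotientGroup.eq_one_iff m).2 hm
      rw [Subgroup.mem_comap, this]
      exact one_mem H
    rcases eq_or_lt_of_le hle with h | h
    · left
      rw [eq_bot_iff]
      intro q hq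
      obtain ⟨p, rfl⟩ := QuotientGroup.mk'_surjective M q
      have hpM : p ∈ M := by rw [h]; exact hq
      simpa [Subgroup.mem_bot] using (QuotientGroup.eq_one_iff p).2 hpM
    · have htop := hM.2 _ h
      right
      rw [eq_top_iff]
      intro q _
      obtain ⟨p, rfl⟩ := QuotientGroup.mk'_surjective M q
      have : p ∈ H.comap (QuotientGroup.mk' M) := by rw [htop]; trivial
      exact this
  have key : ∀ x : P ⧸ M, x ^ 2 = 1 := by
    classical
    intro x
    by_cases hx : x = 1
    · simp [hx]
    obtain ⟨k, hk⟩ := hQ x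
    have hex : ∃ m, x ^ 2 ^ m = 1 := ⟨k, hk⟩
    set k0 := Nat.find hex with hk0
    have h0 : x ^ 2 ^ k0 = 1 := Nat.find_spec hex
    have hk0ne : k0 ≠ 0 := by
      intro hzero
      apply hx
      have h0' := h0
      rw [hzero] at h0'
      simpa using h0'
    set y := x ^ 2 ^ (k0 - 1) with hy
    have hyne : y ≠ 1 := Nat.find_min hex (Nat.sub_lt (Nat.pos_of_ne_zero hk0ne) one_pos)
    have hysq : y ^ 2 = 1 := by
      rw [hy, ← pow_mul, ← pow_succ, Nat.sub_add_cancel (Nat.one_le_iff_ne_zero.2 hk0ne)]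
      exact h0
    rcases hsub (Subgroup.zpowers y) with hb | htp
    · exact absurd (hb ▸ Subgroup.mem_zpowers y) (by simpa [Subgroup.mem_bot] using hyne)
    · have hxmem : x ∈ Subgroup.zpowers y := htp ▸ Subgroup.mem_top x
      obtain ⟨m, hm⟩ := hxmem
      rw [← hm, ← zpow_natCast, ← zpow_mul, mul_comm, zpow_mul, zpow_natCast, hysq, one_zpow]
  have hinv : ∀ x : P ⧸ M, x⁻¹ = x := by
    intro x
    have := key x
    rw [pow_two] at this
    exact inv_eq_of_mul_eq_one_right this
  constructor
  · intro g
    have : ((g : P ⧸ M)) ^ 2 = 1 := key _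
    rw [← QuotientGroup.mk'_apply, ← map_pow] at this
    exact (QuotientGroup.eq_one_iff _).1 this
  · intro g h
    have : ((QuotientGroup.mk' M) (g * h * g⁻¹ * h⁻¹)) = 1 := by
      rw [map_mul, map_mul, map_mul, map_inv, map_inv, hinv, hinv]
      have := key ((QuotientGroup.mk' M) g * (QuotientGroup.mk' M) h)
      rw [pow_two] at this
      rw [show (QuotientGroup.mk' M) g * (QuotientGroup.mk' M) h * (QuotientGroup.mk' M) g *
        (QuotientGroup.mk' M) h = ((QuotientGroup.mk' M) g * (QuotientGroup.mk' M) h) *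
        ((QuotientGroup.mk' M) g * (QuotientGroup.mk' M) h) by group]
      exact this
    exact (QuotientGroup.eq_one_iff _).1 this

lemma mem_frattiniIn_aux {G : Type*} [Group G] [Finite G] {Y : Subgroup G}
    (hP : IsPGroup 2 Y) :
    (∀ g ∈ Y, g ^ 2 ∈ frattiniIn Y) ∧
      (∀ g ∈ Y, ∀ h ∈ Y, g * h * g⁻¹ * h⁻¹ ∈ frattiniIn Y) := by
  have main : ∀ M ∈ {M | IsMaximalIn M Y},
      (∀ g ∈ Y, g ^ 2 ∈ M) ∧ (∀ g ∈ Y, ∀ h ∈ Y, g * h * g⁻¹ * h⁻¹ ∈ M) := by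
    intro M hMmax
    set M' : Subgroup Y := M.comap Y.subtype with hM'
    have hMY : M ≤ Y := hMmax.1.le
    have hcoatom : IsCoatom M' := by
      constructor
      · intro h
        apply absurd hMmax.1.not_ge
        simp only [not_not]
        intro y hy
        have : (⟨y, hy⟩ : Y) ∈ M' := h ▸ Subgroup.mem_top _
        exact this
      · intro K' hK'
        set K : Subgroup G := K'.map Y.subtype with hK
        have hMK : M < K := by
          refine lt_of_le_of_ne (fun m hm => ?_) (fun h => ?_)
          · exact ⟨⟨m, hMY hm⟩, hK'.le hm, rfl⟩
          · apply absurd hK'.not_ge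
            simp only [not_not]
            intro x hx
            have : (x : G) ∈ K := ⟨x, hx, rfl⟩
            rw [← h] at this
            exact this
        have hKY : K ≤ Y := by
          rintro k ⟨x, _, rfl⟩
          exact x.2
        have hKeq : K = Y := hMmax.2 K hMK hKY
        rw [eq_top_iff]
        rintro x -
        have : (x : G) ∈ K := by rw [hKeq]; exact x.2
        obtain ⟨z, hz, hzx⟩ := this
        exact Subtype.ext hzx ▸ hz
    obtain ⟨hsq, hcomm⟩ := coatom_lemma hP hcoatom
    constructor
    · intro g hg
      have := hsq ⟨g, hg⟩
      simpa [hM', Subgroup.mem_comap, Subgroup.mem_subgroupOf] using this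
    · intro g hg h hh
      have := hcomm ⟨g, hg⟩ ⟨h, hh⟩
      simpa [hM', Subgroup.mem_comap, Subgroup.mem_subgroupOf] using this
  constructor
  · intro g hg
    refine Subgroup.mem_inf.2 ⟨pow_mem hg 2, Subgroup.mem_sInf.2 fun M hM => ?_⟩
    exact (main M hM).1 g hg
  · intro g hg h hh
    refine Subgroup.mem_inf.2 ⟨mul_mem (mul_mem (mul_mem hg hh) (inv_mem hg)) (inv_mem hh),
      Subgroup.mem_sInf.2 fun M hM => ?_⟩
    exact (main M hM).2 g hg h hh

end Aux

/-- equation (5.3): under the hypotheses of Proposition 5.4, for every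
`β ∈ X` one has `v + β(v) = α(v) + αβ(v)`. -/
theorem stmt15 (n : ℕ) (X : Subgroup (Equiv.Perm (Leaf n))) (hX : X ≤ W n)
    (α : Equiv.Perm (Leaf n)) (hαW : α ∈ W n) (hαX : α ∉ X)
    (Y : Subgroup (Equiv.Perm (Leaf n))) (hY : Y = X ⊔ Subgroup.closure {α})
    (v : Leaf n → ZMod 2)
    (h1 : ∀ β ∈ X, ∃ u : Leaf n → ZMod 2, (∀ γ ∈ frattiniIn Y, ∀ i, u (γ i) = u i) ∧
      ∀ i, v (α⁻¹ i) + v ((α * β)⁻¹ i) = u i + u ((α * β)⁻¹ i))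
    (h2 : ∀ γ ∈ frattiniIn Y, ∀ i, v (γ i) = v i) :
    ∀ β ∈ X, ∀ i, v i + v (β⁻¹ i) = v (α⁻¹ i) + v ((α * β)⁻¹ i) := by
  have hYW : Y ≤ W n := by
    rw [hY]
    refine sup_le hX ((Subgroup.closure_le _).2 ?_)
    intro x hx
    rcases hx with rfl
    exact hαW
  have hαY : α ∈ Y := by
    rw [hY]
    exact le_sup_right (α := Subgroup (Equiv.Perm (Leaf n))) (Subgroup.subset_closure rfl)
  have hXY : X ≤ Y := hY ▸ le_sup_left
  have hPG : IsPGroup 2 Y := by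
    intro g
    refine ⟨n, Subtype.ext ?_⟩
    push_cast
    exact W_pow n (g : Equiv.Perm (Leaf n)) (hYW g.2)
  obtain ⟨hsq, hcomm⟩ := mem_frattiniIn_aux hPG
  intro β hβ i
  have hβY : β ∈ Y := hXY hβ
  have hφ1 : (α * β)⁻¹ * (α * β)⁻¹ ∈ frattiniIn Y := by
    have : (α * β)⁻¹ * (α * β)⁻¹ = ((α * β) ^ 2)⁻¹ := by
      simp [sq, mul_inv_rev, mul_assoc]
    rw [this]
    exact inv_mem (hsq _ (mul_mem hαY hβY))
  have hφ2 : (α * β * α)⁻¹ * β ∈ frattiniIn Y := by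
    have : (α * β * α)⁻¹ * β = ((β⁻¹ * α * β * α⁻¹) * (α ^ 2))⁻¹ := by group
    rw [this]
    exact inv_mem (mul_mem
      (by simpa [mul_assoc] using hcomm β⁻¹ (inv_mem hβY) α hαY) (hsq α hαY))
  obtain ⟨u, hu, hEq⟩ := h1 β hβ
  have E1 := hEq i
  have E2 := hEq ((α * β)⁻¹ i)
  have c1 : (α * β)⁻¹ ((α * β)⁻¹ i) = ((α * β)⁻¹ * (α * β)⁻¹) i := rfl
  have hv1 : v ((α * β)⁻¹ ((α * β)⁻¹ i)) = v i := by
    rw [c1]; exact h2 _ hφ1 i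
  have hu1 : u ((α * β)⁻¹ ((α * β)⁻¹ i)) = u i := by
    rw [c1]; exact hu _ hφ1 i
  have hv2 : v (α⁻¹ ((α * β)⁻¹ i)) = v (β⁻¹ i) := by
    have harg : α⁻¹ ((α * β)⁻¹ i) = ((α * β * α)⁻¹ * β) (β⁻¹ i) := by
      simp [Equiv.Perm.mul_apply, mul_inv_rev]
    rw [harg]
    exact h2 _ hφ2 _
  rw [hv1, hu1, hv2] at E2
  linear_combination E2 - E1
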